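/- Let r ≥ 1 and let G be an r-regular graph on n vertices with n ≥ r+1. Then q*(G) ≤ 1 − (r+1)/n. Moreover, equality holds for some G if and only if (r+1) divides n, and in that case the unique extremal graph is the disjoint union of n/(r+1) copies of K_{r+1} with the connected-components partition. -/

import Mathlib

open Finset
open scoped Classical

set_option linter.unusedSectionVars false
set_option linter.unusedVariables false
set_option maxHeartbeats 1000000

variable {V : Type*} [Fintype V] [DecidableEq V]

/-- Number of edges of `G` inside vertex set `A` (as a real number). -/
noncomputable def eIn (G : SimpleGraph V) (A : Finset V) : ℝ :=
  (1/2) * ∑ u ∈ A, ∑ v ∈ A, if G.Adj u v then (1:ℝ) else 0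

/-- Total number of edges of `G` (as a real number). -/
noncomputable def numEdges (G : SimpleGraph V) : ℝ := eIn G (univ : Finset V)

/-- Degree of vertex `v` in `G` (as a real number). -/
noncomputable def degR (G : SimpleGraph V) (v : V) : ℝ :=
  ∑ u : V, if G.Adj v u then (1:ℝ) else 0

/-- Volume of vertex set `A`: sum of degrees of its vertices. -/
noncomputable def vol (G : SimpleGraph V) (A : Finset V) : ℝ := ∑ v ∈ A, degR G v

/-- Number of edges of `G` between `A` and its complement (as a real number). -/
noncomputable def eCross (G : SimpleGraph V) (A : Finset V) : ℝ :=
  ∑ u ∈ A, ∑ v ∈ (univ : Finset V) \ A, if G.Adj u v then (1:ℝ) else 0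

/-- The modularity score of a vertex partition `P` of `G`. -/
noncomputable def modScore (G : SimpleGraph V) (P : Finpartition (univ : Finset V)) : ℝ :=
  (∑ A ∈ P.parts, eIn G A) / numEdges G
    - (∑ A ∈ P.parts, (vol G A)^2) / (4 * (numEdges G)^2)

/-- The modularity of `G`: the supremum of modularity scores over all vertex partitions. -/
noncomputable def modularity (G : SimpleGraph V) : ℝ :=
  sSup { q : ℝ | ∃ P : Finpartition (univ : Finset V), q = modScore G P }

/-! ### Auxiliary lemmas -/

lemma ite_nonneg' (p : Prop) [Decidable p] : (0:ℝ) ≤ if p then (1:ℝ) else 0 := by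
  split <;> norm_num

lemma eCross_nonneg (G : SimpleGraph V) (A : Finset V) : 0 ≤ eCross G A :=
  Finset.sum_nonneg fun _ _ => Finset.sum_nonneg fun _ _ => ite_nonneg' _

lemma degR_eq_degree (G : SimpleGraph V) (v : V) : degR G v = (G.degree v : ℝ) := by
  classical
  rw [degR, Finset.sum_boole]
  congr 1
  rw [← SimpleGraph.neighborFinset_eq_filter, SimpleGraph.degree]

lemma degR_reg {G : SimpleGraph V} {r : ℕ} (h : G.IsRegularOfDegree r) (v : V) :
    degR G v = r := by rw [degR_eq_degree, h v]

lemma vol_reg {G : SimpleGraph V} {r : ℕ} (h : G.IsRegularOfDegree r) (A : Finset V) :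
    vol G A = r * A.card := by
  rw [vol]
  rw [Finset.sum_congr rfl fun v _ => degR_reg h v, Finset.sum_const]
  simp [mul_comm]

lemma handshake (G : SimpleGraph V) (A : Finset V) :
    vol G A = 2 * eIn G A + eCross G A := by
  have key : ∀ u : V, degR G u
      = (∑ v ∈ (univ : Finset V) \ A, if G.Adj u v then (1:ℝ) else 0)
        + ∑ v ∈ A, if G.Adj u v then (1:ℝ) else 0 := fun u => by
    rw [degR, ← Finset.sum_sdiff (Finset.subset_univ A)]
  rw [vol, Finset.sum_congr rfl fun u _ => key u, Finset.sum_add_distrib]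
  rw [eIn, eCross]
  ring

lemma numEdges_reg {G : SimpleGraph V} {r : ℕ} (h : G.IsRegularOfDegree r) :
    numEdges G = r * (Fintype.card V) / 2 := by
  have h1 := handshake G (univ : Finset V)
  have h2 : eCross G (univ : Finset V) = 0 := by simp [eCross]
  have h3 : vol G (univ : Finset V) = r * Fintype.card V := by
    rw [vol_reg h]; simp
  rw [numEdges]
  rw [h2, h3] at h1
  linarith

lemma inner_le {G : SimpleGraph V} {A : Finset V} {u : V} (hu : u ∈ A) :
    (∑ v ∈ A, if G.Adj u v then (1:ℝ) else 0) ≤ (A.card : ℝ) - 1 := by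
  have h0 : (if G.Adj u u then (1:ℝ) else 0) = 0 := by simp
  rw [← Finset.sum_erase A h0]
  calc (∑ v ∈ A.erase u, if G.Adj u v then (1:ℝ) else 0)
      ≤ ∑ v ∈ A.erase u, (1:ℝ) := by
        apply Finset.sum_le_sum; intro v _; split <;> norm_num
    _ = ((A.erase u).card : ℝ) := by simp
    _ = (A.card : ℝ) - 1 := by
        rw [Finset.card_erase_of_mem hu]
        have : 1 ≤ A.card := Finset.card_pos.mpr ⟨u, hu⟩
        push_cast [Nat.cast_sub this]
        ring

lemma cross_deg {G : SimpleGraph V} {r : ℕ} (h : G.IsRegularOfDegree r) {A : Finset V}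
    {u : V} (hu : u ∈ A) :
    (r : ℝ) + 1 - (A.card : ℝ) ≤ ∑ v ∈ (univ : Finset V) \ A, if G.Adj u v then (1:ℝ) else 0 := by
  have hsplit : (∑ v ∈ (univ : Finset V) \ A, if G.Adj u v then (1:ℝ) else 0)
      + ∑ v ∈ A, (if G.Adj u v then (1:ℝ) else 0) = (r : ℝ) := by
    rw [Finset.sum_sdiff (Finset.subset_univ A), ← degR, degR_reg h]
  have := inner_le (G := G) hu
  linarith

lemma eCross_lower {G : SimpleGraph V} {r : ℕ} (hr : 1 ≤ r)
    (hn : r + 1 ≤ Fintype.card V) (h : G.IsRegularOfDegree r) (A : Finset V) :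
    (r : ℝ) * A.card * ((r : ℝ) + 1 - A.card) ≤ (Fintype.card V : ℝ) * eCross G A := by
  set n : ℝ := (Fintype.card V : ℝ)
  set a : ℝ := (A.card : ℝ)
  have ha : 0 ≤ a := Nat.cast_nonneg _
  have hnr : (r : ℝ) + 1 ≤ n := by exact_mod_cast Nat.cast_le.mpr hn
  have hc := eCross_nonneg G A
  by_cases hA : a ≤ (r : ℝ) + 1
  · have hcl : a * ((r:ℝ) + 1 - a) ≤ eCross G A := by
      calc a * ((r:ℝ) + 1 - a) = ∑ _u ∈ A, ((r:ℝ) + 1 - a) := by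
            rw [Finset.sum_const]; simp [a, mul_comm]
        _ ≤ eCross G A := Finset.sum_le_sum fun u hu => cross_deg h hu
    nlinarith [mul_nonneg ha (sub_nonneg.mpr hA)]
  · push_neg at hA
    nlinarith [mul_nonneg (Nat.cast_nonneg (α := ℝ) r) ha,
      mul_nonneg (by positivity : (0:ℝ) ≤ n) hc]

lemma eCross_eq_case {G : SimpleGraph V} {r : ℕ} (hr : 1 ≤ r)
    (hn : r + 1 ≤ Fintype.card V) (h : G.IsRegularOfDegree r) {A : Finset V}
    (hA : A.Nonempty)
    (heq : (Fintype.card V : ℝ) * eCross G A + r * (A.card:ℝ)^2 = r * ((r:ℝ)+1) * A.card) :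
    A.card = r + 1 ∧ eCross G A = 0 := by
  have ha1 : (1:ℝ) ≤ (A.card : ℝ) := by
    have := Finset.card_pos.mpr hA; exact_mod_cast this
  set n : ℝ := (Fintype.card V : ℝ) with hndef
  set a : ℝ := (A.card : ℝ) with hadef
  have hnr : (r : ℝ) + 1 ≤ n := by exact_mod_cast Nat.cast_le.mpr hn
  have hr1 : (1:ℝ) ≤ r := by exact_mod_cast hr
  have hc := eCross_nonneg G A
  have hkey : n * eCross G A = (r:ℝ) * a * ((r:ℝ) + 1 - a) := by
    ring_nf; ring_nf at heq; linarith
  by_cases hA2 : a ≤ (r : ℝ)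
  · exfalso
    have hcl : a * ((r:ℝ) + 1 - a) ≤ eCross G A := by
      calc a * ((r:ℝ) + 1 - a) = ∑ _u ∈ A, ((r:ℝ) + 1 - a) := by
            rw [Finset.sum_const]; simp [a, mul_comm]
        _ ≤ eCross G A := Finset.sum_le_sum fun u hu => cross_deg h hu
    nlinarith
  · push_neg at hA2
    have hfac : (0:ℝ) < (r:ℝ) * a := by nlinarith
    have hle : (r:ℝ) + 1 - a ≤ 0 ∨ a = (r:ℝ) + 1 := by
      rcases lt_or_ge a ((r:ℝ)+1) with h1 | h1
      · right
        have h2 : r < A.card := by rw [hadef] at hA2; exact_mod_cast hA2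
        have h3 : r + 1 ≤ A.card := h2
        have : ((r:ℝ)) + 1 ≤ (A.card:ℝ) := by exact_mod_cast h3
        rw [← hadef] at this; linarith
      · left; linarith
    have hc0 : eCross G A = 0 := by
      rcases hle with h1 | h1
      · nlinarith
      · nlinarith [hkey, h1]
    refine ⟨?_, hc0⟩
    rw [hc0] at hkey
    have : a = (r:ℝ) + 1 := by
      have hkey' : (r:ℝ) * a * ((r:ℝ) + 1 - a) = 0 := by rw [← hkey]; ring
      rcases mul_eq_zero.mp hkey' with h1 | h1
      · exact absurd h1 (ne_of_gt hfac)
      · linarith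
    rw [hadef] at this; exact_mod_cast this

/-- the per-part penalty term -/
noncomputable def pterm (G : SimpleGraph V) (r : ℕ) (A : Finset V) : ℝ :=
  eCross G A / (r * Fintype.card V) + ((A.card : ℝ) / Fintype.card V)^2

lemma modScore_eq {G : SimpleGraph V} {r : ℕ} (hr : 1 ≤ r)
    (hn : r + 1 ≤ Fintype.card V) (h : G.IsRegularOfDegree r)
    (P : Finpartition (univ : Finset V)) :
    modScore G P = 1 - ∑ A ∈ P.parts, pterm G r A := by
  have hrpos : (0:ℝ) < r := by exact_mod_cast hr
  have hnpos : (0:ℝ) < Fintype.card V := by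
    have : 0 < Fintype.card V := lt_of_lt_of_le (Nat.succ_pos r) hn
    exact_mod_cast this
  have hm : numEdges G = r * (Fintype.card V) / 2 := numEdges_reg h
  have key : ∀ A ∈ P.parts,
      eIn G A / numEdges G - (vol G A)^2 / (4 * (numEdges G)^2)
        = (A.card : ℝ) / Fintype.card V - pterm G r A := by
    intro A _
    have h1 : eIn G A = ((r:ℝ) * A.card - eCross G A) / 2 := by
      have := handshake G A
      rw [vol_reg h] at this
      linarith
    rw [h1, hm, vol_reg h, pterm]
    field_simp
    ring
  rw [modScore, Finset.sum_div, Finset.sum_div, ← Finset.sum_sub_distrib,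
    Finset.sum_congr rfl key, Finset.sum_sub_distrib]
  have hsum : ∑ A ∈ P.parts, (A.card : ℝ) / Fintype.card V = 1 := by
    rw [← Finset.sum_div]
    have h2 : ∑ A ∈ P.parts, (A.card:ℝ) = (Fintype.card V : ℝ) := by
      rw [← Nat.cast_sum]
      norm_cast
      rw [P.sum_card_parts, Finset.card_univ]
    rw [h2]
    exact div_self (ne_of_gt hnpos)
  rw [hsum]

lemma pterm_ge {G : SimpleGraph V} {r : ℕ} (hr : 1 ≤ r)
    (hn : r + 1 ≤ Fintype.card V) (h : G.IsRegularOfDegree r) (A : Finset V) :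
    ((r:ℝ) + 1) * A.card / (Fintype.card V : ℝ)^2 ≤ pterm G r A := by
  have hrpos : (0:ℝ) < r := by exact_mod_cast hr
  have hnpos : (0:ℝ) < Fintype.card V := by
    have : 0 < Fintype.card V := lt_of_lt_of_le (Nat.succ_pos r) hn
    exact_mod_cast this
  have hident : pterm G r A - ((r:ℝ) + 1) * A.card / (Fintype.card V : ℝ)^2
      = ((Fintype.card V : ℝ) * eCross G A - (r : ℝ) * A.card * ((r : ℝ) + 1 - A.card))
        / ((r:ℝ) * (Fintype.card V : ℝ)^2) := by
    rw [pterm]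
    field_simp
    ring
  have hlow := eCross_lower hr hn h A
  have : 0 ≤ pterm G r A - ((r:ℝ) + 1) * A.card / (Fintype.card V : ℝ)^2 := by
    rw [hident]
    apply div_nonneg (by linarith) (by positivity)
  linarith

lemma sum_lower_eq {r : ℕ} (hnpos : (0:ℝ) < Fintype.card V)
    (P : Finpartition (univ : Finset V)) :
    ∑ A ∈ P.parts, ((r:ℝ) + 1) * A.card / (Fintype.card V : ℝ)^2
      = ((r:ℝ) + 1) / (Fintype.card V : ℝ) := by
  rw [← Finset.sum_div, ← Finset.mul_sum]
  have h2 : ∑ A ∈ P.parts, (A.card:ℝ) = (Fintype.card V : ℝ) := by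
    rw [← Nat.cast_sum]; norm_cast; rw [P.sum_card_parts, Finset.card_univ]
  rw [h2]
  field_simp

lemma sum_pterm_ge {G : SimpleGraph V} {r : ℕ} (hr : 1 ≤ r)
    (hn : r + 1 ≤ Fintype.card V) (h : G.IsRegularOfDegree r)
    (P : Finpartition (univ : Finset V)) :
    ((r:ℝ) + 1) / (Fintype.card V : ℝ) ≤ ∑ A ∈ P.parts, pterm G r A := by
  have hnpos : (0:ℝ) < Fintype.card V := by
    have : 0 < Fintype.card V := lt_of_lt_of_le (Nat.succ_pos r) hn
    exact_mod_cast this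
  rw [← sum_lower_eq (r := r) hnpos P]
  exact Finset.sum_le_sum fun A _ => pterm_ge hr hn h A

lemma modScore_le {G : SimpleGraph V} {r : ℕ} (hr : 1 ≤ r)
    (hn : r + 1 ≤ Fintype.card V) (h : G.IsRegularOfDegree r)
    (P : Finpartition (univ : Finset V)) :
    modScore G P ≤ 1 - ((r:ℝ) + 1) / (Fintype.card V : ℝ) := by
  rw [modScore_eq hr hn h P]
  have := sum_pterm_ge hr hn h P
  linarith

lemma scoreSet_eq (G : SimpleGraph V) :
    { q : ℝ | ∃ P : Finpartition (univ : Finset V), q = modScore G P }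
      = Set.range (modScore G) := by
  ext q; simp [Set.mem_range, eq_comm]

lemma scoreSet_finite (G : SimpleGraph V) :
    { q : ℝ | ∃ P : Finpartition (univ : Finset V), q = modScore G P }.Finite := by
  rw [scoreSet_eq]; exact Set.finite_range _

lemma scoreSet_nonempty (G : SimpleGraph V) (hcard : 0 < Fintype.card V) :
    { q : ℝ | ∃ P : Finpartition (univ : Finset V), q = modScore G P }.Nonempty := by
  have : (univ : Finset V) ≠ ⊥ := by
    have : (univ : Finset V).Nonempty := Finset.univ_nonempty_iff.mpr
      (Fintype.card_pos_iff.mp hcard)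
    simpa [Finset.bot_eq_empty] using this.ne_empty
  exact ⟨modScore G (Finpartition.indiscrete this), ⟨_, rfl⟩⟩

lemma modularity_le {G : SimpleGraph V} {r : ℕ} (hr : 1 ≤ r)
    (hn : r + 1 ≤ Fintype.card V) (h : G.IsRegularOfDegree r) :
    modularity G ≤ 1 - ((r:ℝ) + 1) / (Fintype.card V : ℝ) := by
  apply csSup_le (scoreSet_nonempty G (lt_of_lt_of_le (Nat.succ_pos r) hn))
  rintro q ⟨P, rfl⟩
  exact modScore_le hr hn h P

lemma modularity_mem (G : SimpleGraph V) (hcard : 0 < Fintype.card V) :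
    ∃ P : Finpartition (univ : Finset V), modularity G = modScore G P :=
  Set.Nonempty.csSup_mem (scoreSet_nonempty G hcard) (scoreSet_finite G)

lemma parts_extremal {G : SimpleGraph V} {r : ℕ} (hr : 1 ≤ r)
    (hn : r + 1 ≤ Fintype.card V) (h : G.IsRegularOfDegree r)
    (P : Finpartition (univ : Finset V))
    (hsum : ∑ A ∈ P.parts, pterm G r A = ((r:ℝ) + 1) / (Fintype.card V : ℝ)) :
    ∀ A ∈ P.parts, A.card = r + 1 ∧ eCross G A = 0 := by
  have hrpos : (0:ℝ) < r := by exact_mod_cast hr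
  have hnpos : (0:ℝ) < Fintype.card V := by
    have : 0 < Fintype.card V := lt_of_lt_of_le (Nat.succ_pos r) hn
    exact_mod_cast this
  have hzero : ∑ A ∈ P.parts,
      (pterm G r A - ((r:ℝ) + 1) * A.card / (Fintype.card V : ℝ)^2) = 0 := by
    rw [Finset.sum_sub_distrib, hsum, sum_lower_eq (r := r) hnpos P, sub_self]
  have heach := (Finset.sum_eq_zero_iff_of_nonneg
    (fun A hA => sub_nonneg.mpr (pterm_ge hr hn h A))).mp hzero
  intro A hA
  have hident : pterm G r A - ((r:ℝ) + 1) * A.card / (Fintype.card V : ℝ)^2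
      = ((Fintype.card V : ℝ) * eCross G A
          - (r:ℝ) * A.card * (((r:ℝ)+1) - A.card)) / ((r:ℝ) * (Fintype.card V : ℝ)^2) := by
    rw [pterm]; field_simp; ring
  have hq : ((Fintype.card V : ℝ) * eCross G A
      - (r:ℝ) * A.card * (((r:ℝ)+1) - A.card)) / ((r:ℝ) * (Fintype.card V : ℝ)^2) = 0 := by
    rw [← hident]; exact heach A hA
  have hnum : (Fintype.card V : ℝ) * eCross G A
      - (r:ℝ) * A.card * (((r:ℝ)+1) - A.card) = 0 := by
    rcases div_eq_zero_iff.mp hq with h1 | h1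
    · exact h1
    · exact absurd h1 (by positivity)
  have hpoly : (Fintype.card V : ℝ) * eCross G A + r * (A.card:ℝ)^2
      = r * ((r:ℝ)+1) * A.card := by linear_combination hnum
  exact eCross_eq_case hr hn h (P.nonempty_of_mem_parts hA) hpoly

lemma adj_closed {G : SimpleGraph V} {A : Finset V} (hc : eCross G A = 0)
    {u v : V} (hu : u ∈ A) (huv : G.Adj u v) : v ∈ A := by
  by_contra hv
  have h1 : ∀ x ∈ A, (0:ℝ) ≤ ∑ w ∈ (univ : Finset V) \ A, if G.Adj x w then (1:ℝ) else 0 :=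
    fun x _ => Finset.sum_nonneg fun w _ => by split <;> norm_num
  have h2 := (Finset.sum_eq_zero_iff_of_nonneg h1).mp hc u hu
  have h3 : ∀ w ∈ (univ : Finset V) \ A, (0:ℝ) ≤ (if G.Adj u w then (1:ℝ) else 0) :=
    fun w _ => by split <;> norm_num
  have h4 := (Finset.sum_eq_zero_iff_of_nonneg h3).mp h2 v (by simp [hv])
  rw [if_pos huv] at h4
  norm_num at h4

lemma part_complete {G : SimpleGraph V} {r : ℕ} (h : G.IsRegularOfDegree r)
    {A : Finset V} (hcard : A.card = r + 1) (hc : eCross G A = 0)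
    {u v : V} (hu : u ∈ A) (hv : v ∈ A) (huv : u ≠ v) : G.Adj u v := by
  have hsub : G.neighborFinset u ⊆ A.erase u := by
    intro w hw
    rw [SimpleGraph.mem_neighborFinset] at hw
    exact Finset.mem_erase.mpr ⟨fun he => G.loopless.irrefl u (he ▸ hw), adj_closed hc hu hw⟩
  have hcards : (A.erase u).card ≤ (G.neighborFinset u).card := by
    rw [Finset.card_erase_of_mem hu, hcard, SimpleGraph.card_neighborFinset_eq_degree, h u]
    simp
  have heq := Finset.eq_of_subset_of_card_le hsub hcards
  have : v ∈ G.neighborFinset u := by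
    rw [heq]; exact Finset.mem_erase.mpr ⟨huv.symm, hv⟩
  rwa [SimpleGraph.mem_neighborFinset] at this

lemma reach_in_part {G : SimpleGraph V} {A : Finset V} (hc : eCross G A = 0)
    {u v : V} (hu : u ∈ A) (h : G.Reachable u v) : v ∈ A := by
  obtain ⟨w⟩ := h
  induction w with
  | nil => exact hu
  | cons hadj p ih => exact ih (adj_closed hc hu hadj)

lemma exists_extremal (r : ℕ) (hr : 1 ≤ r) (hn : r + 1 ≤ Fintype.card V)
    (hdvd : (r + 1) ∣ Fintype.card V) :
    ∃ (G : SimpleGraph V) (P : Finpartition (univ : Finset V)),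
      G.IsRegularOfDegree r ∧
      (∀ A ∈ P.parts, A.card = r + 1 ∧ eCross G A = 0) := by
  obtain ⟨k, hk⟩ := hdvd
  have e : V ≃ Fin k × Fin (r+1) :=
    Fintype.equivOfCardEq (by simp [hk]; ring)
  let G : SimpleGraph V :=
    { Adj := fun u v => u ≠ v ∧ (e u).1 = (e v).1
      symm := ⟨fun u v h => ⟨h.1.symm, h.2.symm⟩⟩
      loopless := ⟨fun u h => h.1 rfl⟩ }
  have hfiber : ∀ i : Fin k, (univ.filter fun v => (e v).1 = i).card = r + 1 := by
    intro i
    have h1 : (univ.filter fun v => (e v).1 = i).card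
        = (univ : Finset (Fin (r+1))).card := by
      apply Finset.card_bij' (fun v _ => (e v).2) (fun j _ => e.symm (i, j))
      · intro a ha; exact mem_univ _
      · intro j hj; simp
      · intro a ha
        simp only [mem_filter] at ha
        rw [← ha.2]
        simp
      · intro j hj; simp
    simpa using h1
  have hnbr : ∀ v : V,
      G.neighborFinset v = (univ.filter fun u => (e u).1 = (e v).1).erase v := by
    intro v
    ext u
    simp only [SimpleGraph.mem_neighborFinset, Finset.mem_erase, mem_filter, mem_univ,
      true_and]
    constructor
    · rintro ⟨h1, h2⟩; exact ⟨fun h => h1 h.symm, h2.symm⟩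
    · rintro ⟨h1, h2⟩; exact ⟨fun h => h1 h.symm, h2.symm⟩
  have hreg : ∀ v : V, (G.neighborFinset v).card = r := by
    intro v
    rw [hnbr v, Finset.card_erase_of_mem (by simp), hfiber]
    simp
  let st : Setoid V := ⟨fun u v => (e u).1 = (e v).1, ⟨fun _ => rfl, Eq.symm, Eq.trans⟩⟩
  let P : Finpartition (univ : Finset V) := Finpartition.ofSetoid st
  refine ⟨G, P, fun v => ?_, ?_⟩
  · unfold SimpleGraph.degree SimpleGraph.neighborFinset
    rw [Set.toFinset_card]
    have h2 := hreg v
    rw [SimpleGraph.neighborFinset, Set.toFinset_card] at h2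
    convert h2 using 2
  intro A hA
  obtain ⟨a, ha⟩ := P.nonempty_of_mem_parts hA
  have hpart : P.part a = A := P.part_eq_of_mem hA ha
  have hmem : ∀ b, b ∈ A ↔ (e a).1 = (e b).1 := by
    intro b
    rw [← hpart]
    exact Finpartition.mem_part_ofSetoid_iff_rel
  have hAeq : A = univ.filter fun b => (e b).1 = (e a).1 := by
    ext b
    simp only [mem_filter, mem_univ, true_and]
    rw [hmem b, eq_comm]
  constructor
  · rw [hAeq, hfiber]
  · apply Finset.sum_eq_zero
    intro u hu
    apply Finset.sum_eq_zero
    intro v hv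
    rw [if_neg]
    rintro ⟨hne, hef⟩
    rw [Finset.mem_sdiff] at hv
    exact hv.2 ((hmem v).mpr (((hmem u).mp hu).trans hef))

lemma score_of_parts {G : SimpleGraph V} {r : ℕ} (hr : 1 ≤ r)
    (hn : r + 1 ≤ Fintype.card V) (h : G.IsRegularOfDegree r)
    (P : Finpartition (univ : Finset V))
    (hparts : ∀ A ∈ P.parts, A.card = r + 1 ∧ eCross G A = 0) :
    modScore G P = 1 - ((r:ℝ) + 1) / (Fintype.card V : ℝ) := by
  have hrpos : (0:ℝ) < r := by exact_mod_cast hr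
  have hnpos : (0:ℝ) < Fintype.card V := by
    have : 0 < Fintype.card V := lt_of_lt_of_le (Nat.succ_pos r) hn
    exact_mod_cast this
  rw [modScore_eq hr hn h P]
  have hterm : ∑ A ∈ P.parts, pterm G r A
      = ∑ A ∈ P.parts, ((r:ℝ) + 1) * A.card / (Fintype.card V : ℝ)^2 := by
    apply Finset.sum_congr rfl
    intro A hA
    obtain ⟨h1, h2⟩ := hparts A hA
    rw [pterm, h2, h1]
    push_cast
    field_simp
    ring
  rw [hterm, sum_lower_eq (r := r) hnpos P]

/-- every `r`-regular graph on `n ≥ r+1` vertices has modularity at most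
`1-(r+1)/n`; this bound is attained by some `r`-regular graph iff `(r+1) ∣ n`; and any
extremal graph is a disjoint union of copies of `K_{r+1}` (every component is complete
with `r+1` vertices, i.e. reachability implies equality or adjacency). -/
theorem modularity_regular_max (r : ℕ) (hr : 1 ≤ r)
    (hn : r + 1 ≤ Fintype.card V) :
    (∀ G : SimpleGraph V, G.IsRegularOfDegree r →
        modularity G ≤ 1 - ((r : ℝ) + 1) / (Fintype.card V))
    ∧ ((∃ G : SimpleGraph V, G.IsRegularOfDegree r ∧
          modularity G = 1 - ((r : ℝ) + 1) / (Fintype.card V))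
        ↔ (r + 1) ∣ Fintype.card V)
    ∧ (∀ G : SimpleGraph V, G.IsRegularOfDegree r →
        modularity G = 1 - ((r : ℝ) + 1) / (Fintype.card V) →
        ∀ u v : V, G.Reachable u v → u = v ∨ G.Adj u v) := by
  have hnpos : 0 < Fintype.card V := lt_of_lt_of_le (Nat.succ_pos r) hn
  have extract : ∀ G : SimpleGraph V, G.IsRegularOfDegree r →
      modularity G = 1 - ((r : ℝ) + 1) / (Fintype.card V) →
      ∃ P : Finpartition (univ : Finset V),
        ∀ A ∈ P.parts, A.card = r + 1 ∧ eCross G A = 0 := by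
    intro G hG hmod
    obtain ⟨P, hP⟩ := modularity_mem G hnpos
    rw [hmod] at hP
    have hsum : ∑ A ∈ P.parts, pterm G r A = ((r:ℝ) + 1) / (Fintype.card V : ℝ) := by
      have h1 := modScore_eq hr hn hG P
      rw [← hP] at h1
      linarith
    exact ⟨P, parts_extremal hr hn hG P hsum⟩
  refine ⟨fun G hG => modularity_le hr hn hG, ⟨?_, ?_⟩, ?_⟩
  · rintro ⟨G, hG, hmod⟩
    obtain ⟨P, hparts⟩ := extract G hG hmod
    refine ⟨P.parts.card, ?_⟩
    have h1 : ∑ A ∈ P.parts, A.card = Fintype.card V := by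
      rw [P.sum_card_parts, Finset.card_univ]
    rw [← h1, Finset.sum_congr rfl fun A hA => (hparts A hA).1, Finset.sum_const,
      smul_eq_mul, mul_comm]
  · intro hdvd
    obtain ⟨G, P, hreg, hparts⟩ := exists_extremal r hr hn hdvd
    refine ⟨G, hreg, ?_⟩
    have hscore := score_of_parts hr hn hreg P hparts
    exact le_antisymm (modularity_le hr hn hreg)
      (le_csSup (scoreSet_finite G).bddAbove ⟨P, hscore.symm⟩)
  · intro G hG hmod u v hreach
    obtain ⟨P, hparts⟩ := extract G hG hmod
    have hA : P.part u ∈ P.parts := P.part_mem.2 (mem_univ u)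
    obtain ⟨hcard, hc⟩ := hparts (P.part u) hA
    have hu : u ∈ P.part u := P.mem_part (mem_univ u)
    have hv : v ∈ P.part u := reach_in_part hc hu hreach
    by_cases hcase : u = v
    · exact Or.inl hcase
    · exact Or.inr (part_complete hG hcard hc hu hv hcase)
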